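/- Let K₁ = (1 + E(−4) + E(−6))·(1 − E(−6))·(1 − E(−4))·(1 − E(12)) and K₂ = (1 + E(−2) + E(−4))·(1 − E(−2))·(1 − E(−10))·(1 − E(10)) in ℚ[[λ]]. Then the following three identities hold: (i) 2 · (14/3) · ( (144/22) · c₃(K₁)/((−12)·48) + (100/22) · c₃(K₂)/((−10)·(−40)) ) = 28; (ii) 2 · (14/3) · ( 12 · c₄(K₁)/((−12)·48) + 10 · c₄(K₂)/((−10)·(−40)) ) = 28; (iii) 2 · (14/3) · ( c₅(K₁)/((−12)·48) + c₅(K₂)/((−10)·(−40)) ) = −14/3. (These are the localization computations of the degree-3 invariants ⟨τ₀(h₂)⟩₃ = 28, ⟨τ₁(h₁)⟩₃ = 28, ⟨τ₂(1)⟩₃ = −14/3 of the local Calabi–Yau 4-fold over the Mukai–Umemura threefold.) -/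

import Mathlib

/-- `E a` is the exponential power series `∑ aⁿ λⁿ / n!` in `ℚ[[λ]]`. -/
noncomputable def E (a : ℤ) : PowerSeries ℚ :=
  PowerSeries.mk fun n => (a : ℚ) ^ n / n.factorial

/-- `c k F` is the coefficient of `λ^k` in `F ∈ ℚ[[λ]]`. -/
noncomputable def c (k : ℕ) (F : PowerSeries ℚ) : ℚ := PowerSeries.coeff k F

lemma c_E (k : ℕ) (a : ℤ) : c k (E a) = (a : ℚ) ^ k / k.factorial := by
  simp [c, E]

lemma c_one (k : ℕ) : c k (1 : PowerSeries ℚ) = if k = 0 then 1 else 0 := by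
  simp [c, PowerSeries.coeff_one]

lemma c_add (k : ℕ) (F G : PowerSeries ℚ) : c k (F + G) = c k F + c k G := by
  simp [c]

lemma c_sub (k : ℕ) (F G : PowerSeries ℚ) : c k (F - G) = c k F - c k G := by
  simp [c]

lemma c_mul (k : ℕ) (F G : PowerSeries ℚ) :
    c k (F * G) = ∑ i ∈ Finset.range (k + 1), c i F * c (k - i) G := by
  simp [c, PowerSeries.coeff_mul, Finset.Nat.sum_antidiagonal_eq_sum_range_succ_mk]

/-- Localization computations of the degree-3 invariants `⟨τ₀(h₂)⟩₃ = 28`,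
`⟨τ₁(h₁)⟩₃ = 28`, `⟨τ₂(1)⟩₃ = −14/3` of the local Calabi–Yau 4-fold over the
Mukai–Umemura threefold. -/
theorem stmt_15 :
    let K₁ : PowerSeries ℚ :=
      (1 + E (-4) + E (-6)) * (1 - E (-6)) * (1 - E (-4)) * (1 - E 12)
    let K₂ : PowerSeries ℚ :=
      (1 + E (-2) + E (-4)) * (1 - E (-2)) * (1 - E (-10)) * (1 - E 10)
    (2 * (14 / 3) * ((144 / 22) * c 3 K₁ / ((-12) * 48)
        + (100 / 22) * c 3 K₂ / ((-10) * (-40))) = (28 : ℚ))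
    ∧ (2 * (14 / 3) * (12 * c 4 K₁ / ((-12) * 48)
        + 10 * c 4 K₂ / ((-10) * (-40))) = (28 : ℚ))
    ∧ (2 * (14 / 3) * (c 5 K₁ / ((-12) * 48)
        + c 5 K₂ / ((-10) * (-40))) = (-14 / 3 : ℚ)) := by
  refine ⟨?_, ?_, ?_⟩ <;>
    simp only [c_mul, c_sub, c_add, c_one, c_E, Finset.sum_range_succ,
      Finset.sum_range_zero] <;>
    norm_num [Nat.factorial]
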